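/- Let H be a real Hilbert space, g ∈ H, σ > 0, and let ψ : H → ℝ be a convex function. Suppose h : H → ℝ is defined by h(v) = (1/2)·( √(‖v‖² + σ²) − ⟨g, v⟩ )₊² + ψ(v), where x₊ = max(x,0). Then h is convex. -/

import Mathlib

open RealInnerProductSpace

/-- In a real Hilbert space, `v ↦ (1/2)(√(‖v‖² + σ²) − ⟨g, v⟫)₊² + ψ(v)` is
convex whenever `ψ` is convex. -/
theorem convex_gordon_objective {H : Type*} [NormedAddCommGroup H]
    [InnerProductSpace ℝ H] (g : H) (σ : ℝ) (hσ : 0 < σ)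
    (ψ : H → ℝ) (hψ : ConvexOn ℝ Set.univ ψ) :
    ConvexOn ℝ Set.univ
      (fun v : H =>
        (1 / 2) * (max (Real.sqrt (‖v‖ ^ 2 + σ ^ 2) - ⟪g, v⟫) 0) ^ 2 + ψ v) := by
  -- the affine map `v ↦ (v, σ)` into `WithLp 2 (H × ℝ)`
  let L : H →ₗ[ℝ] WithLp 2 (H × ℝ) :=
    (WithLp.linearEquiv 2 ℝ (H × ℝ)).symm.toLinearMap ∘ₗ LinearMap.inl ℝ H ℝ
  let A : H →ᵃ[ℝ] WithLp 2 (H × ℝ) :=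
    L.toAffineMap + AffineMap.const ℝ H ((WithLp.equiv 2 (H × ℝ)).symm (0, σ))
  have hA : ∀ v : H, ‖A v‖ = Real.sqrt (‖v‖ ^ 2 + σ ^ 2) := by
    intro v
    have h1 : (A v).fst = v := by
      show v + (0 : H) = v
      exact add_zero v
    have h2 : (A v).snd = σ := by
      show (0 : ℝ) + σ = σ
      exact zero_add σ
    rw [WithLp.prod_norm_eq_of_L2, h1, h2, Real.norm_eq_abs, sq_abs]
  -- convexity of `v ↦ √(‖v‖² + σ²)`
  have hsqrt : ConvexOn ℝ Set.univ fun v : H => Real.sqrt (‖v‖ ^ 2 + σ ^ 2) := by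
    have := (convexOn_univ_norm (E := WithLp 2 (H × ℝ))).comp_affineMap A
    simp only [Set.preimage_univ] at this
    suffices hf : (fun v : H => Real.sqrt (‖v‖ ^ 2 + σ ^ 2)) = norm ∘ A by rw [hf]; exact this
    funext v
    exact (hA v).symm
  have hlin : ConvexOn ℝ Set.univ fun v : H => -⟪g, v⟫ :=
    (-(innerₗ H g)).convexOn convex_univ
  have hsub : ConvexOn ℝ Set.univ fun v : H => Real.sqrt (‖v‖ ^ 2 + σ ^ 2) - ⟪g, v⟫ := by
    simp only [sub_eq_add_neg]
    exact hsqrt.add hlin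
  have hmax : ConvexOn ℝ Set.univ
      fun v : H => max (Real.sqrt (‖v‖ ^ 2 + σ ^ 2) - ⟪g, v⟫) 0 :=
    hsub.sup (convexOn_const 0 convex_univ)
  have hsq : ConvexOn ℝ Set.univ
      fun v : H => (max (Real.sqrt (‖v‖ ^ 2 + σ ^ 2) - ⟪g, v⟫) 0) ^ 2 := by
    set m : H → ℝ := fun v => max (Real.sqrt (‖v‖ ^ 2 + σ ^ 2) - ⟪g, v⟫) 0 with hm
    obtain ⟨-, hm2⟩ := hmax
    refine ⟨convex_univ, fun x _ y _ a b ha hb hab => ?_⟩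
    have h1 : m (a • x + b • y) ≤ a * m x + b * m y := by
      simpa [smul_eq_mul] using hm2 (Set.mem_univ x) (Set.mem_univ y) ha hb hab
    have h0 : 0 ≤ m (a • x + b • y) := le_max_right _ _
    have hx0 : 0 ≤ m x := le_max_right _ _
    have hy0 : 0 ≤ m y := le_max_right _ _
    simp only [smul_eq_mul]
    nlinarith [sq_nonneg (m x - m y), mul_nonneg ha hb, mul_nonneg (mul_nonneg ha hb) (sq_nonneg (m x - m y))]
  have hsmul : ConvexOn ℝ Set.univ
      fun v : H => (1 / 2) * (max (Real.sqrt (‖v‖ ^ 2 + σ ^ 2) - ⟪g, v⟫) 0) ^ 2 := by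
    simpa [smul_eq_mul] using hsq.smul (by norm_num : (0:ℝ) ≤ 1 / 2)
  exact hsmul.add hψ
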